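/- Let f : ℝ → ℝ be a convex function with f(0) = 0, f differentiable at 0 with f'(0) = 0, and suppose f' is differentiable at 0 with second derivative A ≥ 0, i.e. f(t) = (A/2)t² + o(t²) as t → 0. For a < 0 < b, let ℓ(a,b) = ∫_a^b √(1 + f'(t)²) dt be the arc length and r(a,b) = √((b-a)² + (f(b)-f(a))²) the chord length of the graph of f between (a, f(a)) and (b, f(b)). Then lim_{a,b → 0} (ℓ(a,b) - r(a,b))/(b-a)³ = A²/24. -/

import Mathlib

set_option maxHeartbeats 1000000

open Real Filter MeasureTheory Set
open scoped Topology

lemma sqrt_est {u : ℝ} (h0 : 0 ≤ u) (h1 : u ≤ 1) :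
    |Real.sqrt (1 + u) - (1 + u / 2)| ≤ u ^ 2 / 8 := by
  have hs : Real.sqrt (1 + u) ^ 2 = 1 + u := Real.sq_sqrt (by linarith)
  have hn : 0 ≤ Real.sqrt (1 + u) := Real.sqrt_nonneg _
  have hc : (0:ℝ) ≤ 1 + u / 2 - u ^ 2 / 8 := by nlinarith
  have hlo : 1 + u / 2 - u ^ 2 / 8 ≤ Real.sqrt (1 + u) := by
    rw [show (1:ℝ) + u = (1 + u/2 - u^2/8)^2 + (u^3/8 - u^4/64) by ring]
    have h4 : u^4 ≤ u^3 := by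
      calc u^4 = u^3*u := by ring
        _ ≤ u^3*1 := mul_le_mul_of_nonneg_left h1 (pow_nonneg h0 3)
        _ = u^3 := by ring
    have h3 : (0:ℝ) ≤ u^3 := pow_nonneg h0 3
    have h2 : (0:ℝ) ≤ u^3/8 - u^4/64 := by linarith
    calc 1 + u / 2 - u ^ 2 / 8 = Real.sqrt ((1 + u/2 - u^2/8)^2) := by
          rw [Real.sqrt_sq hc]
      _ ≤ _ := Real.sqrt_le_sqrt (by linarith)
  rw [abs_le]
  constructor
  · linarith
  · nlinarith [sq_nonneg (Real.sqrt (1 + u) - (1 + u / 2)), sq_nonneg u]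

lemma comb_est (ε K M d : ℝ) (hε : 0 < ε) (hK : 1 ≤ K)
    (h2 : M ^ 2 * d ≤ d ^ 3) (h3 : M ^ 3 ≤ d ^ 3) :
    ε * (K + 1) * M ^ 2 * d + ε * M ^ 2 * d + 4 * ε * K * M ^ 3
      ≤ ε * (5 * K + 2) * d ^ 3 := by
  have t1 := mul_le_mul_of_nonneg_left h2 (by positivity : (0:ℝ) ≤ ε * (K + 1))
  have t2 := mul_le_mul_of_nonneg_left h2 hε.le
  have t3 := mul_le_mul_of_nonneg_left h3 (by positivity : (0:ℝ) ≤ 4 * ε * (K:ℝ))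
  nlinarith

lemma key_est (f : ℝ → ℝ) (A ε δ : ℝ) (hA : 0 ≤ A) (hε : 0 < ε) (hε1 : ε ≤ 1)
    (hδ : 0 < δ) (hδ2 : 16 * (A + 1) ^ 4 * δ ^ 2 ≤ ε)
    (hg : ∀ t : ℝ, |t| ≤ δ → |deriv f t - A * t| ≤ ε * |t|)
    (hf : ∀ t : ℝ, |t| ≤ δ → |f t - A / 2 * t ^ 2| ≤ ε * t ^ 2)
    (a b : ℝ) (ha : -δ < a) (ha0 : a < 0) (hb0 : 0 < b) (hb : b < δ) :
    |((∫ t in a..b, Real.sqrt (1 + (deriv f t) ^ 2)) -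
        Real.sqrt ((b - a) ^ 2 + (f b - f a) ^ 2)) / (b - a) ^ 3 - A ^ 2 / 24|
      ≤ (5 * A + 7) * ε := by
  obtain ⟨K, hK⟩ : ∃ K : ℝ, K = A + 1 := ⟨_, rfl⟩
  have hK1 : 1 ≤ K := by linarith
  have hK0 : 0 < K := by linarith
  have hab : a < b := lt_trans ha0 hb0
  have hd0 : 0 < b - a := by linarith
  obtain ⟨M, hM⟩ : ∃ M : ℝ, M = max (-a) b := ⟨_, rfl⟩
  have hMa : -a ≤ M := hM ▸ le_max_left _ _
  have hMb : b ≤ M := hM ▸ le_max_right _ _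
  have hM0 : 0 < M := lt_of_lt_of_le hb0 hMb
  have hMd : M ≤ b - a := by rw [hM]; apply max_le <;> linarith
  have hMδ : M ≤ δ := by rw [hM]; apply max_le <;> linarith
  have hδK : 16 * K ^ 4 * δ ^ 2 ≤ ε := by rw [hK]; exact hδ2
  -- basic smallness facts
  have hK24 : K ^ 2 ≤ K ^ 4 := by
    nlinarith [mul_nonneg (mul_nonneg (sq_nonneg K) (by linarith : (0:ℝ) ≤ K - 1))
      (by linarith : (0:ℝ) ≤ K + 1)]
  have hK4δ : K ^ 4 * δ ^ 2 ≤ ε / 16 := by linarith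
  have hK2δ4 : K ^ 2 * δ ^ 2 ≤ K ^ 4 * δ ^ 2 :=
    mul_le_mul_of_nonneg_right hK24 (sq_nonneg δ)
  have hKδ : K ^ 2 * δ ^ 2 ≤ 1 := by linarith
  have hM2δ : M ^ 2 ≤ δ ^ 2 := pow_le_pow_left₀ hM0.le hMδ 2
  have hK4M : K ^ 4 * M ^ 2 ≤ ε / 16 := by
    have := mul_le_mul_of_nonneg_left hM2δ (by positivity : (0:ℝ) ≤ K ^ 4)
    linarith
  -- pointwise bounds
  have habs : ∀ t : ℝ, t ∈ Set.Ioc a b → |t| ≤ M := by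
    intro t ht
    rw [abs_le]
    exact ⟨by nlinarith [ht.1], le_trans ht.2 hMb⟩
  have hgb : ∀ t : ℝ, |t| ≤ M → |deriv f t| ≤ K * |t| := by
    intro t ht
    have h1 := hg t (le_trans ht hMδ)
    have h2 := abs_nonneg t
    calc |deriv f t| = |(deriv f t - A * t) + A * t| := by ring_nf
      _ ≤ |deriv f t - A * t| + |A * t| := abs_add_le _ _
      _ ≤ ε * |t| + A * |t| := by rw [abs_mul, abs_of_nonneg hA]; linarith
      _ ≤ K * |t| := by nlinarith
  -- Step 1: pointwise integrand bound
  have hpt : ∀ t : ℝ, t ∈ Set.Ioc a b →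
      |Real.sqrt (1 + (deriv f t) ^ 2) - (1 + A ^ 2 / 2 * t ^ 2)| ≤ ε * (K + 1) * M ^ 2 := by
    intro t ht
    have htM := habs t ht
    have hgt := hgb t htM
    have htn := abs_nonneg t
    have hgn := abs_nonneg (deriv f t)
    have hgM : |deriv f t| ≤ K * M := le_trans hgt (by nlinarith)
    have hg2 : (deriv f t) ^ 2 ≤ K ^ 2 * M ^ 2 := by
      have h9 := pow_le_pow_left₀ hgn hgM 2
      rw [sq_abs] at h9
      calc (deriv f t) ^ 2 ≤ (K * M) ^ 2 := h9
        _ = K ^ 2 * M ^ 2 := by ring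
    have hg2' : (deriv f t) ^ 2 ≤ 1 := by nlinarith [sq_nonneg M, sq_nonneg K]
    have h1 := sqrt_est (sq_nonneg (deriv f t)) hg2'
    have h4 := hg t (le_trans htM hMδ)
    have h2 : |(deriv f t) ^ 2 - A ^ 2 * t ^ 2| ≤ 2 * ε * K * M ^ 2 := by
      have e1 : (deriv f t) ^ 2 - A ^ 2 * t ^ 2
          = (deriv f t - A * t) * (deriv f t + A * t) := by ring
      rw [e1, abs_mul]
      have h3 : |deriv f t + A * t| ≤ 2 * K * |t| := by
        calc |deriv f t + A * t| ≤ |deriv f t| + |A * t| := abs_add_le _ _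
          _ ≤ K * |t| + A * |t| := by rw [abs_mul, abs_of_nonneg hA]; linarith
          _ ≤ 2 * K * |t| := by nlinarith
      calc |deriv f t - A * t| * |deriv f t + A * t| ≤ (ε * |t|) * (2 * K * |t|) :=
            mul_le_mul h4 h3 (abs_nonneg _) (by positivity)
        _ = 2 * ε * K * |t| ^ 2 := by ring
        _ ≤ 2 * ε * K * M ^ 2 := by
            have ht2 : |t| ^ 2 ≤ M ^ 2 := pow_le_pow_left₀ htn htM 2
            nlinarith [mul_nonneg (mul_nonneg hε.le hK0.le) (sub_nonneg.mpr ht2)]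
    have h5 : ((deriv f t) ^ 2) ^ 2 / 8 ≤ ε * M ^ 2 / 64 := by
      have h6 : ((deriv f t) ^ 2) ^ 2 ≤ (K ^ 2 * M ^ 2) ^ 2 := by
        apply sq_le_sq' _ hg2
        nlinarith [sq_nonneg (deriv f t)]
      have h8 : (K ^ 2 * M ^ 2) ^ 2 = (K ^ 4 * M ^ 2) * M ^ 2 := by ring
      nlinarith [sq_nonneg M]
    have key : Real.sqrt (1 + (deriv f t) ^ 2) - (1 + A ^ 2 / 2 * t ^ 2)
        = (Real.sqrt (1 + (deriv f t) ^ 2) - (1 + (deriv f t) ^ 2 / 2))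
          + ((deriv f t) ^ 2 - A ^ 2 * t ^ 2) / 2 := by ring
    calc |Real.sqrt (1 + (deriv f t) ^ 2) - (1 + A ^ 2 / 2 * t ^ 2)|
        ≤ |Real.sqrt (1 + (deriv f t) ^ 2) - (1 + (deriv f t) ^ 2 / 2)|
          + |((deriv f t) ^ 2 - A ^ 2 * t ^ 2) / 2| := by rw [key]; exact abs_add_le _ _
      _ ≤ ((deriv f t) ^ 2) ^ 2 / 8 + (2 * ε * K * M ^ 2) / 2 := by
          have : |((deriv f t) ^ 2 - A ^ 2 * t ^ 2) / 2|
              = |(deriv f t) ^ 2 - A ^ 2 * t ^ 2| / 2 := by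
            rw [abs_div]; norm_num
          rw [this]
          exact add_le_add h1 (by linarith)
      _ ≤ ε * M ^ 2 / 64 + ε * K * M ^ 2 := by linarith
      _ ≤ ε * (K + 1) * M ^ 2 := by nlinarith [sq_nonneg M]
  -- integrand is at most 2 pointwise on Ioc
  have hg2I : ∀ t ∈ Set.Ioc a b, (deriv f t) ^ 2 ≤ 1 := by
    intro t ht
    have htM := habs t ht
    have hgt := hgb t htM
    have hgn := abs_nonneg (deriv f t)
    have htn := abs_nonneg t
    have hgM : |deriv f t| ≤ K * M := le_trans hgt (by nlinarith)
    have h9 := pow_le_pow_left₀ hgn hgM 2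
    rw [sq_abs] at h9
    nlinarith [sq_nonneg M, sq_nonneg K]
  -- integrability of the arclength integrand
  have hmeas : Measurable fun t => Real.sqrt (1 + (deriv f t) ^ 2) :=
    (measurable_const.add ((measurable_deriv f).pow_const 2)).sqrt
  have hInt : IntervalIntegrable (fun t => Real.sqrt (1 + (deriv f t) ^ 2)) volume a b := by
    rw [intervalIntegrable_iff_integrableOn_Ioc_of_le hab.le]
    refine Integrable.mono' (g := fun _ => (2:ℝ))
      (integrableOn_const measure_Ioc_lt_top.ne)
      hmeas.aestronglyMeasurable.restrict ?_
    filter_upwards [ae_restrict_mem measurableSet_Ioc] with t ht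
    rw [Real.norm_eq_abs, abs_of_nonneg (Real.sqrt_nonneg _)]
    calc Real.sqrt (1 + (deriv f t) ^ 2) ≤ Real.sqrt 4 :=
          Real.sqrt_le_sqrt (by have := hg2I t ht; linarith)
      _ = 2 := by
          rw [show (4:ℝ) = 2 ^ 2 by norm_num, Real.sqrt_sq (by norm_num : (0:ℝ) ≤ 2)]
  have hpoly : IntervalIntegrable (fun t : ℝ => 1 + A ^ 2 / 2 * t ^ 2) volume a b :=
    ((continuous_const.add (continuous_const.mul (continuous_pow 2))).intervalIntegrable a b)
  have hpolyval : (∫ t in a..b, (1 + A ^ 2 / 2 * t ^ 2))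
      = (b - a) + A ^ 2 / 2 * ((b ^ 3 - a ^ 3) / 3) := by
    rw [intervalIntegral.integral_add (f := fun _ => (1:ℝ)) (g := fun t => A ^ 2 / 2 * t ^ 2) intervalIntegrable_const
      ((continuous_const.mul (continuous_pow 2)).intervalIntegrable a b),
      intervalIntegral.integral_const, intervalIntegral.integral_const_mul,
      integral_pow]
    push_cast
    simp only [smul_eq_mul, mul_one]
    ring
  -- Step 2: integral estimate
  have hIest : |(∫ t in a..b, Real.sqrt (1 + (deriv f t) ^ 2))
      - ((b - a) + A ^ 2 / 2 * ((b ^ 3 - a ^ 3) / 3))|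
      ≤ (ε * (K + 1) * M ^ 2) * (b - a) := by
    have h10 := intervalIntegral.norm_integral_le_of_norm_le_const
      (C := ε * (K + 1) * M ^ 2)
      (f := fun t => Real.sqrt (1 + (deriv f t) ^ 2) - (1 + A ^ 2 / 2 * t ^ 2))
      (a := a) (b := b) (by
        intro x hx
        rw [Set.uIoc_of_le hab.le] at hx
        rw [Real.norm_eq_abs]
        exact hpt x hx)
    rw [intervalIntegral.integral_sub hInt hpoly, hpolyval, Real.norm_eq_abs,
      abs_of_pos hd0] at h10
    exact h10
  -- Step 3: chord estimate
  have hfb := hf b (by rw [abs_of_pos hb0]; linarith)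
  have hfa := hf a (by rw [abs_of_neg ha0]; linarith)
  have ha2M : a ^ 2 ≤ M ^ 2 := by
    have h9 := pow_le_pow_left₀ (neg_nonneg.mpr ha0.le) hMa 2
    rwa [Even.neg_pow even_two] at h9
  have hb2M : b ^ 2 ≤ M ^ 2 := pow_le_pow_left₀ hb0.le hMb 2
  have hDP : |(f b - f a) - A / 2 * (b ^ 2 - a ^ 2)| ≤ 2 * ε * M ^ 2 := by
    have e2 : (f b - f a) - A / 2 * (b ^ 2 - a ^ 2)
        = (f b - A / 2 * b ^ 2) - (f a - A / 2 * a ^ 2) := by ring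
    rw [e2]
    calc |(f b - A / 2 * b ^ 2) - (f a - A / 2 * a ^ 2)|
        ≤ |f b - A / 2 * b ^ 2| + |f a - A / 2 * a ^ 2| := abs_sub _ _
      _ ≤ ε * b ^ 2 + ε * a ^ 2 := add_le_add hfb hfa
      _ ≤ 2 * ε * M ^ 2 := by
          have h1 := mul_le_mul_of_nonneg_left ha2M hε.le
          have h2 := mul_le_mul_of_nonneg_left hb2M hε.le
          linarith
  have hPabs : |A / 2 * (b ^ 2 - a ^ 2)| ≤ K * M ^ 2 := by
    rw [abs_mul, abs_of_nonneg (by linarith : (0:ℝ) ≤ A / 2)]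
    have h1 : |b ^ 2 - a ^ 2| ≤ 2 * M ^ 2 := by
      rw [abs_le]
      constructor <;> [skip; skip] <;>
        (have := sq_nonneg a; have := sq_nonneg b; linarith)
    have h2 := mul_le_mul_of_nonneg_left h1 (by linarith : (0:ℝ) ≤ A / 2)
    have h3 := mul_le_mul_of_nonneg_right (show A ≤ K by linarith) (sq_nonneg M)
    linarith
  have hDabs : |f b - f a| ≤ 3 * K * M ^ 2 := by
    calc |f b - f a| = |((f b - f a) - A / 2 * (b ^ 2 - a ^ 2)) + A / 2 * (b ^ 2 - a ^ 2)| := by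
          ring_nf
      _ ≤ |(f b - f a) - A / 2 * (b ^ 2 - a ^ 2)| + |A / 2 * (b ^ 2 - a ^ 2)| := abs_add_le _ _
      _ ≤ 2 * ε * M ^ 2 + K * M ^ 2 := add_le_add hDP hPabs
      _ ≤ 3 * K * M ^ 2 := by
          have h1 := mul_le_mul_of_nonneg_right
            (show 2 * ε ≤ 2 * K by linarith) (sq_nonneg M)
          linarith
  -- write the chord via sqrt(1+u)
  obtain ⟨u, hu⟩ : ∃ u : ℝ, u = ((f b - f a) / (b - a)) ^ 2 := ⟨_, rfl⟩
  have hu0 : 0 ≤ u := hu ▸ sq_nonneg _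
  have hD2 : (f b - f a) ^ 2 ≤ 9 * K ^ 2 * M ^ 4 := by
    have h9 := pow_le_pow_left₀ (abs_nonneg _) hDabs 2
    rw [sq_abs] at h9
    calc (f b - f a) ^ 2 ≤ (3 * K * M ^ 2) ^ 2 := h9
      _ = 9 * K ^ 2 * M ^ 4 := by ring
  have huM : u ≤ 9 * K ^ 2 * M ^ 2 := by
    rw [hu, div_pow]
    calc (f b - f a) ^ 2 / (b - a) ^ 2 ≤ (9 * K ^ 2 * M ^ 4) / M ^ 2 := by
          apply div_le_div₀ (by positivity) hD2 (by positivity)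
          exact pow_le_pow_left₀ hM0.le hMd 2
      _ = 9 * K ^ 2 * M ^ 2 := by field_simp
  have hu1 : u ≤ 1 := by
    have h1 := mul_le_mul_of_nonneg_left hM2δ (by positivity : (0:ℝ) ≤ K ^ 2)
    linarith
  have hsqrtu := sqrt_est hu0 hu1
  have hu2 : u ^ 2 ≤ 6 * ε * M ^ 2 := by
    have h9 := pow_le_pow_left₀ hu0 huM 2
    have h8 := mul_le_mul_of_nonneg_right hK4M (sq_nonneg M)
    calc u ^ 2 ≤ (9 * K ^ 2 * M ^ 2) ^ 2 := h9
      _ = 81 * (K ^ 4 * M ^ 2 * M ^ 2) := by ring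
      _ ≤ 81 * (ε / 16 * M ^ 2) := by linarith
      _ ≤ 6 * ε * M ^ 2 := by
          linarith [mul_nonneg hε.le (sq_nonneg M)]
  have hchordrw : Real.sqrt ((b - a) ^ 2 + (f b - f a) ^ 2)
      = (b - a) * Real.sqrt (1 + u) := by
    rw [show (b - a) ^ 2 + (f b - f a) ^ 2 = (b - a) ^ 2 * (1 + u) by
      rw [hu]; field_simp]
    rw [Real.sqrt_mul (sq_nonneg _), Real.sqrt_sq hd0.le]
  have hrest : |Real.sqrt ((b - a) ^ 2 + (f b - f a) ^ 2)
      - ((b - a) + (f b - f a) ^ 2 / (2 * (b - a)))| ≤ ε * M ^ 2 * (b - a) := by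
    have e3 : (b - a) + (f b - f a) ^ 2 / (2 * (b - a)) = (b - a) * (1 + u / 2) := by
      rw [hu]; field_simp
    rw [hchordrw, e3, ← mul_sub, abs_mul, abs_of_pos hd0]
    calc (b - a) * |Real.sqrt (1 + u) - (1 + u / 2)| ≤ (b - a) * (u ^ 2 / 8) :=
          mul_le_mul_of_nonneg_left hsqrtu hd0.le
      _ ≤ (b - a) * (ε * M ^ 2) :=
          mul_le_mul_of_nonneg_left
            (by linarith [mul_nonneg hε.le (sq_nonneg M)]) hd0.le
      _ = ε * M ^ 2 * (b - a) := by ring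
  have hmid : |(f b - f a) ^ 2 / (2 * (b - a))
      - A ^ 2 * (b + a) ^ 2 * (b - a) / 8| ≤ 4 * ε * K * M ^ 3 := by
    have e4 : A ^ 2 * (b + a) ^ 2 * (b - a) / 8
        = (A / 2 * (b ^ 2 - a ^ 2)) ^ 2 / (2 * (b - a)) := by
      field_simp
      ring
    rw [e4, div_sub_div_same, abs_div, abs_of_pos (by linarith : (0:ℝ) < 2 * (b - a))]
    have e5 : (f b - f a) ^ 2 - (A / 2 * (b ^ 2 - a ^ 2)) ^ 2
        = ((f b - f a) - A / 2 * (b ^ 2 - a ^ 2))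
          * ((f b - f a) + A / 2 * (b ^ 2 - a ^ 2)) := by ring
    have h11 : |(f b - f a) + A / 2 * (b ^ 2 - a ^ 2)| ≤ 4 * K * M ^ 2 := by
      calc |(f b - f a) + A / 2 * (b ^ 2 - a ^ 2)|
          ≤ |f b - f a| + |A / 2 * (b ^ 2 - a ^ 2)| := abs_add_le _ _
        _ ≤ 3 * K * M ^ 2 + K * M ^ 2 := add_le_add hDabs hPabs
        _ = 4 * K * M ^ 2 := by ring
    have h12 : |(f b - f a) ^ 2 - (A / 2 * (b ^ 2 - a ^ 2)) ^ 2|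
        ≤ 8 * ε * K * M ^ 4 := by
      rw [e5, abs_mul]
      calc |(f b - f a) - A / 2 * (b ^ 2 - a ^ 2)| * |(f b - f a) + A / 2 * (b ^ 2 - a ^ 2)|
          ≤ (2 * ε * M ^ 2) * (4 * K * M ^ 2) :=
            mul_le_mul hDP h11 (abs_nonneg _) (by positivity)
        _ = 8 * ε * K * M ^ 4 := by ring
    calc |(f b - f a) ^ 2 - (A / 2 * (b ^ 2 - a ^ 2)) ^ 2| / (2 * (b - a))
        ≤ (8 * ε * K * M ^ 4) / (2 * M) := by
          apply div_le_div₀ (by positivity) h12 (by positivity)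
          linarith
      _ = 4 * ε * K * M ^ 3 := by field_simp; ring
  -- Step 4: combine
  have hMd2 : M ^ 2 * (b - a) ≤ (b - a) ^ 3 := by
    have h1 := mul_le_mul_of_nonneg_right (pow_le_pow_left₀ hM0.le hMd 2) hd0.le
    calc M ^ 2 * (b - a) ≤ (b - a) ^ 2 * (b - a) := h1
      _ = (b - a) ^ 3 := by ring
  have hMd3 : M ^ 3 ≤ (b - a) ^ 3 := pow_le_pow_left₀ hM0.le hMd 3
  have hmain : |((∫ t in a..b, Real.sqrt (1 + (deriv f t) ^ 2))
      - Real.sqrt ((b - a) ^ 2 + (f b - f a) ^ 2)) - A ^ 2 * (b - a) ^ 3 / 24|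
      ≤ ε * (5 * K + 2) * (b - a) ^ 3 := by
    have e6 : ((∫ t in a..b, Real.sqrt (1 + (deriv f t) ^ 2))
        - Real.sqrt ((b - a) ^ 2 + (f b - f a) ^ 2)) - A ^ 2 * (b - a) ^ 3 / 24
        = ((∫ t in a..b, Real.sqrt (1 + (deriv f t) ^ 2))
            - ((b - a) + A ^ 2 / 2 * ((b ^ 3 - a ^ 3) / 3)))
          - (Real.sqrt ((b - a) ^ 2 + (f b - f a) ^ 2)
            - ((b - a) + (f b - f a) ^ 2 / (2 * (b - a))))
          - ((f b - f a) ^ 2 / (2 * (b - a)) - A ^ 2 * (b + a) ^ 2 * (b - a) / 8) := by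
      ring
    rw [e6]
    have step : ∀ x y z : ℝ, |x - y - z| ≤ |x| + |y| + |z| := by
      intro x y z
      calc |x - y - z| ≤ |x - y| + |z| := abs_sub _ _
        _ ≤ |x| + |y| + |z| := by have := abs_sub x y; linarith
    refine le_trans (step _ _ _) (le_trans
      (add_le_add (add_le_add hIest hrest) hmid) ?_)
    exact comb_est ε K M (b - a) hε hK1 hMd2 hMd3
  have e7 : ((∫ t in a..b, Real.sqrt (1 + (deriv f t) ^ 2))
      - Real.sqrt ((b - a) ^ 2 + (f b - f a) ^ 2)) / (b - a) ^ 3 - A ^ 2 / 24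
      = (((∫ t in a..b, Real.sqrt (1 + (deriv f t) ^ 2))
          - Real.sqrt ((b - a) ^ 2 + (f b - f a) ^ 2)) - A ^ 2 * (b - a) ^ 3 / 24)
        / (b - a) ^ 3 := by
    have h25 : A ^ 2 * (b - a) ^ 3 / 24 / (b - a) ^ 3 = A ^ 2 / 24 := by
      field_simp
    simp only [sub_div]
    rw [h25]
  rw [e7, abs_div, abs_of_pos (by positivity : (0:ℝ) < (b - a) ^ 3)]
  rw [div_le_iff₀ (by positivity : (0:ℝ) < (b - a) ^ 3)]
  calc |_| ≤ ε * (5 * K + 2) * (b - a) ^ 3 := hmain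
    _ = (5 * A + 7) * ε * (b - a) ^ 3 := by rw [hK]; ring

/-- **Arc/chord expansion for convex plane curves** (Appendix A, Proposition on the
arc/chord curvature): if `f` is convex, `f 0 = 0`, `f` is differentiable at `0` with
`f'(0) = 0`, and `f` has the second-order expansions `f'(t) = A t + o(t)` and
`f(t) = (A/2) t² + o(t²)` with `A ≥ 0`, then, writing `ℓ(a,b)` for the arc length and
`r(a,b)` for the chord length of the graph of `f` between `(a, f a)` and `(b, f b)`,
we have `(ℓ - r)/(b - a)³ → A²/24` as `a → 0⁻` and `b → 0⁺`. -/
theorem arc_chord_expansion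
    (f : ℝ → ℝ) (A : ℝ) (hA : 0 ≤ A)
    (hconv : ConvexOn ℝ Set.univ f)
    (hf0 : f 0 = 0)
    (hd : HasDerivAt f 0 0)
    (hf1 : (fun t => deriv f t - A * t) =o[𝓝 0] fun t => t)
    (hf2 : (fun t => f t - A / 2 * t ^ 2) =o[𝓝 0] fun t => t ^ 2) :
    Tendsto
      (fun p : ℝ × ℝ =>
        ((∫ t in p.1..p.2, Real.sqrt (1 + (deriv f t) ^ 2)) -
            Real.sqrt ((p.2 - p.1) ^ 2 + (f p.2 - f p.1) ^ 2)) / (p.2 - p.1) ^ 3)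
      ((𝓝[<] (0 : ℝ)) ×ˢ (𝓝[>] (0 : ℝ)))
      (𝓝 (A ^ 2 / 24)) := by
  rw [Metric.tendsto_nhds]
  intro ε₀ hε₀
  obtain ⟨ε, hε, hε1, hεC⟩ : ∃ ε : ℝ, 0 < ε ∧ ε ≤ 1 ∧ (5 * A + 7) * ε < ε₀ := by
    refine ⟨min 1 (ε₀ / (5 * A + 8)), ?_, min_le_left _ _, ?_⟩
    · apply lt_min one_pos
      positivity
    · have h1 : min 1 (ε₀ / (5 * A + 8)) ≤ ε₀ / (5 * A + 8) := min_le_right _ _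
      have h2 : (0:ℝ) < 5 * A + 8 := by linarith
      have h3 : (5 * A + 7) * (ε₀ / (5 * A + 8)) < ε₀ := by
        rw [← mul_div_assoc, div_lt_iff₀ h2]
        nlinarith
      calc (5 * A + 7) * min 1 (ε₀ / (5 * A + 8))
          ≤ (5 * A + 7) * (ε₀ / (5 * A + 8)) :=
            mul_le_mul_of_nonneg_left h1 (by linarith)
        _ < ε₀ := h3
  have ev1 := hf1.def hε
  have ev2 := hf2.def hε
  obtain ⟨δ₁, hδ₁, hδ₁p⟩ := Metric.eventually_nhds_iff.mp (ev1.and ev2)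
  obtain ⟨δ, hδ0, hδsq, hδlt⟩ :
      ∃ δ : ℝ, 0 < δ ∧ 16 * (A + 1) ^ 4 * δ ^ 2 ≤ ε ∧ δ < δ₁ := by
    refine ⟨min (δ₁ / 2) (Real.sqrt (ε / (16 * (A + 1) ^ 4))), ?_, ?_, ?_⟩
    · apply lt_min (by linarith)
      apply Real.sqrt_pos.mpr
      positivity
    · have h1 : min (δ₁ / 2) (Real.sqrt (ε / (16 * (A + 1) ^ 4)))
          ≤ Real.sqrt (ε / (16 * (A + 1) ^ 4)) := min_le_right _ _
      have h2 : (0:ℝ) ≤ min (δ₁ / 2) (Real.sqrt (ε / (16 * (A + 1) ^ 4))) := by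
        apply le_min (by linarith)
        exact Real.sqrt_nonneg _
      have h3 := pow_le_pow_left₀ h2 h1 2
      rw [Real.sq_sqrt (by positivity)] at h3
      have h4 : (0:ℝ) < 16 * (A + 1) ^ 4 := by positivity
      calc 16 * (A + 1) ^ 4 * min (δ₁ / 2) (Real.sqrt (ε / (16 * (A + 1) ^ 4))) ^ 2
          ≤ 16 * (A + 1) ^ 4 * (ε / (16 * (A + 1) ^ 4)) :=
            mul_le_mul_of_nonneg_left h3 h4.le
        _ = ε := by field_simp
    · calc min (δ₁ / 2) (Real.sqrt (ε / (16 * (A + 1) ^ 4))) ≤ δ₁ / 2 := min_le_left _ _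
        _ < δ₁ := by linarith
  have hg : ∀ t : ℝ, |t| ≤ δ → |deriv f t - A * t| ≤ ε * |t| := by
    intro t ht
    have := (hδ₁p (show dist t 0 < δ₁ by rw [Real.dist_eq, sub_zero]; linarith)).1
    rwa [Real.norm_eq_abs, Real.norm_eq_abs] at this
  have hfq : ∀ t : ℝ, |t| ≤ δ → |f t - A / 2 * t ^ 2| ≤ ε * t ^ 2 := by
    intro t ht
    have := (hδ₁p (show dist t 0 < δ₁ by rw [Real.dist_eq, sub_zero]; linarith)).2
    rwa [Real.norm_eq_abs, Real.norm_eq_abs, abs_of_nonneg (sq_nonneg t)] at this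
  have hmem : Set.Ioo (-δ) 0 ×ˢ Set.Ioo 0 δ ∈ (𝓝[<] (0:ℝ)) ×ˢ (𝓝[>] (0:ℝ)) :=
    Filter.prod_mem_prod
      (Ioo_mem_nhdsLT_of_mem ⟨by linarith, le_refl _⟩)
      (Ioo_mem_nhdsGT_of_mem ⟨le_refl _, hδ0⟩)
  filter_upwards [hmem] with p hp
  obtain ⟨⟨hpa1, hpa2⟩, hpb1, hpb2⟩ := hp
  rw [Real.dist_eq]
  calc |((∫ t in p.1..p.2, Real.sqrt (1 + (deriv f t) ^ 2)) -
        Real.sqrt ((p.2 - p.1) ^ 2 + (f p.2 - f p.1) ^ 2)) / (p.2 - p.1) ^ 3 - A ^ 2 / 24|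
      ≤ (5 * A + 7) * ε :=
        key_est f A ε δ hA hε hε1 hδ0 hδsq hg hfq p.1 p.2 hpa1 hpa2 hpb1 hpb2
    _ < ε₀ := hεC
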